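/- Every block of a minimally 2-edge-connected (multi)graph is minimally 2-edge-connected. -/

import Mathlib

/-- A multigraph on vertex type `V` with edge type `E`: each edge has an unordered pair
of endvertices. -/
structure Multigraph (V : Type) (E : Type) where
  ends : E → Sym2 V

namespace Multigraph

variable {V E : Type}

/-- Walks in a multigraph. -/
inductive Walk (G : Multigraph V E) : V → V → Type
  | nil (v : V) : Walk G v v
  | cons {u v w : V} (e : E) (h : G.ends e = s(u, v)) (p : Walk G v w) : Walk G u w

namespace Walk

variable {G : Multigraph V E}

/-- The list of vertices visited by a walk. -/
def support : ∀ {u v : V}, G.Walk u v → List V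
  | _, _, .nil v => [v]
  | u, _, .cons _ _ p => u :: p.support

/-- The list of edges used by a walk. -/
def edges : ∀ {u v : V}, G.Walk u v → List E
  | _, _, .nil _ => []
  | _, _, .cons e _ p => e :: p.edges

end Walk

/-- There is a `u`–`v` walk all of whose edges lie in `B` and all of whose vertices lie in `S`. -/
def ReachableIn (G : Multigraph V E) (S : Set V) (B : Set E) (u v : V) : Prop :=
  ∃ p : G.Walk u v, (∀ e ∈ p.edges, e ∈ B) ∧ ∀ w ∈ p.support, w ∈ S

/-- The subgraph with vertex set `S` and edge set `B` is connected. -/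
def ConnectedOn (G : Multigraph V E) (S : Set V) (B : Set E) : Prop :=
  S.Nonempty ∧ ∀ u ∈ S, ∀ v ∈ S, G.ReachableIn S B u v

/-- The subgraph `(S, B)` has edge-connectivity at least `k`: removing fewer than `k`
edges of `B` never disconnects it. -/
def EdgeConnAtLeastOn (G : Multigraph V E) (S : Set V) (B : Set E) (k : ℕ) : Prop :=
  ∀ F : Finset E, ↑F ⊆ B → F.card < k →
    ∀ u ∈ S, ∀ v ∈ S, G.ReachableIn S (B \ ↑F) u v

/-- The subgraph `(S, B)` is minimally `2`-edge-connected: its edge-connectivity equals `2`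
and deleting any edge decreases the edge-connectivity below `2`. -/
def MinTwoEdgeConnOn (G : Multigraph V E) (S : Set V) (B : Set E) : Prop :=
  G.EdgeConnAtLeastOn S B 2 ∧ ¬ G.EdgeConnAtLeastOn S B 3 ∧
    ∀ e ∈ B, ¬ G.EdgeConnAtLeastOn S (B \ {e}) 2

/-- `G` is minimally `2`-edge-connected. -/
def MinTwoEdgeConn (G : Multigraph V E) : Prop :=
  G.MinTwoEdgeConnOn Set.univ Set.univ

/-- `λ_G(u,v)`: the maximum number of pairwise edge-disjoint `u`–`v` paths in `G`. -/
noncomputable def lambda (G : Multigraph V E) (u v : V) : ℕ :=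
  sSup {k | ∃ p : Fin k → G.Walk u v, (∀ i, (p i).support.Nodup) ∧
    ∀ i j, i ≠ j → ∀ e ∈ (p i).edges, e ∉ (p j).edges}

/-- `κ_G(u,v)`: the maximum number of pairwise internally disjoint `u`–`v` paths in `G`. -/
noncomputable def kappa (G : Multigraph V E) (u v : V) : ℕ :=
  sSup {k | ∃ p : Fin k → G.Walk u v, (∀ i, (p i).support.Nodup) ∧
    ∀ i j, i ≠ j →
      ((∀ w ∈ (p i).support, w ∈ (p j).support → w = u ∨ w = v) ∧
        ∀ e ∈ (p i).edges, e ∉ (p j).edges)}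

open Classical in
/-- The degree of a vertex: the number of edges incident with it. -/
noncomputable def degree (G : Multigraph V E) [Fintype E] (v : V) : ℕ :=
  (Finset.univ.filter fun e => v ∈ G.ends e).card

/-- The average edge-connectivity of `G`: the average of `λ_G(u,v)` over all unordered pairs
of distinct vertices (computed as the sum over ordered pairs divided by `n(n-1)`). -/
noncomputable def avgLambda (G : Multigraph V E) [Fintype V] [DecidableEq V] : ℚ :=
  (∑ p ∈ Finset.univ.offDiag, (G.lambda p.1 p.2 : ℚ)) /
    ((Fintype.card V : ℚ) * ((Fintype.card V : ℚ) - 1))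

/-- `G` is `2`-connected: it has at least three vertices, and deleting any single vertex
leaves a connected graph. -/
def TwoConnected (G : Multigraph V E) [Fintype V] : Prop :=
  3 ≤ Fintype.card V ∧ ∀ x u v : V, u ≠ x → v ≠ x → G.ReachableIn {x}ᶜ Set.univ u v

/-- `f` is a bridge of the spanning subgraph with edge set `B`: its removal separates
its endvertices. -/
def IsBridgeOn (G : Multigraph V E) (B : Set E) (f : E) : Prop :=
  f ∈ B ∧ ∀ x y, G.ends f = s(x, y) → ¬ G.ReachableIn Set.univ (B \ {f}) x y

/-- All endvertices of edges of `B` lie in `S`. -/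
def IsSubgraphPair (G : Multigraph V E) (S : Set V) (B : Set E) : Prop :=
  ∀ e ∈ B, ∀ x, x ∈ G.ends e → x ∈ S

/-- The subgraph `(S, B)` has no cut vertex. -/
def NoCutVertexOn (G : Multigraph V E) (S : Set V) (B : Set E) : Prop :=
  ∀ x, ∀ u ∈ S, ∀ v ∈ S, u ≠ x → v ≠ x → G.ReachableIn (S \ {x}) B u v

/-- `(S, B)` is a block of `G`: a maximal connected subgraph without a cut vertex. -/
def IsBlock (G : Multigraph V E) (S : Set V) (B : Set E) : Prop :=
  G.IsSubgraphPair S B ∧ G.ConnectedOn S B ∧ G.NoCutVertexOn S B ∧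
    ∀ S' B', S ⊆ S' → B ⊆ B' → G.IsSubgraphPair S' B' → G.ConnectedOn S' B' →
      G.NoCutVertexOn S' B' → S' = S ∧ B' = B

end Multigraph

namespace Multigraph

variable {V E : Type} {G : Multigraph V E}

namespace Walk

lemma support_eq_cons : ∀ {u v : V} (p : G.Walk u v), p.support = u :: p.support.tail
  | _, _, .nil v => rfl
  | _, _, .cons _ _ _ => rfl

lemma support_ne_nil {u v : V} (p : G.Walk u v) : p.support ≠ [] := by
  rw [support_eq_cons]; simp

lemma start_mem_support {u v : V} (p : G.Walk u v) : u ∈ p.support := by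
  rw [support_eq_cons]; simp

lemma end_mem_support : ∀ {u v : V} (p : G.Walk u v), v ∈ p.support
  | _, _, .nil v => by simp [support]
  | _, _, .cons _ _ p => by simp [support, end_mem_support p]

def append : ∀ {u v w : V}, G.Walk u v → G.Walk v w → G.Walk u w
  | _, _, _, .nil _, q => q
  | _, _, _, .cons e h p, q => .cons e h (append p q)

lemma edges_append : ∀ {u v w : V} (p : G.Walk u v) (q : G.Walk v w),
    (append p q).edges = p.edges ++ q.edges
  | _, _, _, .nil _, q => rfl
  | _, _, _, .cons e h p, q => by simp [append, edges, edges_append p q]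

lemma support_append : ∀ {u v w : V} (p : G.Walk u v) (q : G.Walk v w),
    (append p q).support = p.support.dropLast ++ q.support
  | _, _, _, .nil _, q => by simp [append, support]
  | _, _, _, .cons e h p, q => by
      simp only [append, support, support_append p q]
      rw [List.dropLast_cons_of_ne_nil (support_ne_nil p)]
      rfl

lemma mem_support_append {u v w x : V} (p : G.Walk u v) (q : G.Walk v w)
    (hx : x ∈ (append p q).support) : x ∈ p.support ∨ x ∈ q.support := by
  rw [support_append] at hx
  rcases List.mem_append.1 hx with h | h
  · exact Or.inl (List.dropLast_subset _ h)
  · exact Or.inr h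

def reverse : ∀ {u v : V}, G.Walk u v → G.Walk v u
  | _, _, .nil v => .nil v
  | _, _, .cons e h p => append (reverse p) (.cons e (by rw [h, Sym2.eq_swap]) (.nil _))

lemma support_reverse : ∀ {u v : V} (p : G.Walk u v), (reverse p).support = p.support.reverse
  | _, _, .nil v => rfl
  | u, v, .cons e h p => by
      simp only [reverse, support_append, support_reverse p, support]
      rw [support_eq_cons p]
      simp

lemma edges_reverse : ∀ {u v : V} (p : G.Walk u v), (reverse p).edges = p.edges.reverse
  | _, _, .nil v => rfl
  | u, v, .cons e h p => by
      simp [reverse, edges_append, edges_reverse p, edges]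

lemma support_concat {u v : V} (p : G.Walk u v) :
    ∃ t, p.support = t ++ [v] ∧ (p.support.Nodup → v ∉ t) := by
  have h1 : (reverse p).support = v :: (reverse p).support.tail := support_eq_cons _
  have h2 := support_reverse p
  have h3 : p.support = ((reverse p).support.tail).reverse ++ [v] := by
    have h4 : p.support.reverse = v :: (reverse p).support.tail := h2 ▸ h1
    have := congrArg List.reverse h4
    simpa using this
  refine ⟨((reverse p).support.tail).reverse, h3, ?_⟩
  · intro hnd hv
    rw [h3] at hnd
    have := List.disjoint_of_nodup_append hnd
    exact this hv (by simp)

lemma mem_support_of_mem_edges : ∀ {u v : V} (p : G.Walk u v) (g : E), g ∈ p.edges →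
    ∀ x, x ∈ G.ends g → x ∈ p.support
  | _, _, .nil _, g, hg => by simp [edges] at hg
  | u, _, .cons e h p, g, hg => by
      intro x hx
      simp only [edges, List.mem_cons] at hg
      rcases hg with rfl | hg
      · rw [h] at hx
        rcases Sym2.mem_iff.1 hx with rfl | rfl
        · exact start_mem_support _
        · simp [support, start_mem_support p]
      · simp [support, mem_support_of_mem_edges p g hg x hx]

end Walk

namespace ReachableIn

lemma refl {S : Set V} {B : Set E} {u : V} (hu : u ∈ S) : G.ReachableIn S B u u :=
  ⟨.nil u, by simp [Walk.edges], by simp [Walk.support, hu]⟩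

lemma mono {S S' : Set V} {B B' : Set E} {u v : V} (hS : S ⊆ S') (hB : B ⊆ B')
    (h : G.ReachableIn S B u v) : G.ReachableIn S' B' u v := by
  obtain ⟨p, he, hs⟩ := h
  exact ⟨p, fun e hep => hB (he e hep), fun w hwp => hS (hs w hwp)⟩

lemma trans {S : Set V} {B : Set E} {u v w : V} (h1 : G.ReachableIn S B u v)
    (h2 : G.ReachableIn S B v w) : G.ReachableIn S B u w := by
  obtain ⟨p, hpe, hps⟩ := h1
  obtain ⟨q, hqe, hqs⟩ := h2
  refine ⟨p.append q, ?_, ?_⟩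
  · intro e he; rw [Walk.edges_append] at he
    rcases List.mem_append.1 he with h | h
    · exact hpe e h
    · exact hqe e h
  · intro x hx
    rcases Walk.mem_support_append p q hx with h | h
    · exact hps x h
    · exact hqs x h

lemma symm {S : Set V} {B : Set E} {u v : V} (h : G.ReachableIn S B u v) :
    G.ReachableIn S B v u := by
  obtain ⟨p, hpe, hps⟩ := h
  refine ⟨p.reverse, ?_, ?_⟩
  · intro e he; rw [Walk.edges_reverse] at he; exact hpe e (List.mem_reverse.1 he)
  · intro x hx; rw [Walk.support_reverse] at hx; exact hps x (List.mem_reverse.1 hx)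

end ReachableIn

namespace Walk

/-- Lemma D: suffix extraction. -/
lemma exists_suffix : ∀ {u v : V} (p : G.Walk u v) (w : V), w ∈ p.support →
    ∃ q : G.Walk w v, (∀ g ∈ q.edges, g ∈ p.edges) ∧ (∀ x ∈ q.support, x ∈ p.support) ∧
      (p.support.Nodup → q.support.Nodup)
  | _, _, .nil v, w, hw => by
      simp [support] at hw; subst hw
      exact ⟨.nil _, by simp, by simp, fun h => h⟩
  | u, _, .cons e h p, w, hw => by
      simp only [support, List.mem_cons] at hw
      rcases hw with rfl | hw
      · exact ⟨.cons e h p, fun g hg => hg, fun x hx => hx, fun h => h⟩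
      · obtain ⟨q, h1, h2, h3⟩ := exists_suffix p w hw
        exact ⟨q, fun g hg => by simp [edges, h1 g hg],
          fun x hx => by simp [support, h2 x hx],
          fun hnd => h3 (by simp [support] at hnd; exact hnd.2)⟩

/-- Bypass: extract a path from a walk. -/
lemma exists_path : ∀ {u v : V} (p : G.Walk u v),
    ∃ q : G.Walk u v, q.support.Nodup ∧ (∀ g ∈ q.edges, g ∈ p.edges) ∧
      (∀ x ∈ q.support, x ∈ p.support)
  | _, _, .nil v => ⟨.nil v, by simp [support], by simp, by simp⟩
  | u, _, .cons (v := u') (w := w) e h p => by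
      obtain ⟨q, hnd, hqe, hqs⟩ := exists_path p
      by_cases hu : u ∈ q.support
      · obtain ⟨r, h1, h2, h3⟩ := exists_suffix q u hu
        exact ⟨r, h3 hnd, fun g hg => by simp [edges, hqe g (h1 g hg)],
          fun x hx => by simp [support, hqs x (h2 x hx)]⟩
      · refine ⟨.cons e h q, by simp [support, hnd, hu], ?_, ?_⟩
        · intro g hg
          simp only [edges, List.mem_cons] at hg ⊢
          rcases hg with rfl | hg
          · exact Or.inl rfl
          · exact Or.inr (hqe g hg)
        · intro x hx
          simp only [support, List.mem_cons] at hx ⊢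
          rcases hx with rfl | hx
          · exact Or.inl rfl
          · exact Or.inr (hqs x hx)

/-- Lemma R: from any vertex on a path, reach one of the endpoints avoiding a
forbidden vertex `z`. -/
lemma reach_end_avoiding : ∀ {u v : V} (p : G.Walk u v), p.support.Nodup →
    ∀ (z w : V), w ∈ p.support → w ≠ z →
    (u ≠ z ∧ ∃ q : G.Walk w u, (∀ g ∈ q.edges, g ∈ p.edges) ∧
        (∀ x ∈ q.support, x ∈ p.support ∧ x ≠ z)) ∨
    (v ≠ z ∧ ∃ q : G.Walk w v, (∀ g ∈ q.edges, g ∈ p.edges) ∧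
        (∀ x ∈ q.support, x ∈ p.support ∧ x ≠ z))
  | _, _, .nil v, hnd, z, w, hw, hwz => by
      simp [support] at hw; subst hw
      exact Or.inl ⟨hwz, .nil _, by simp, by simp [support, hwz]⟩
  | u, v, .cons (v := u') e h p, hnd, z, w, hw, hwz => by
      simp only [support, List.mem_cons] at hw
      have hnd' : p.support.Nodup ∧ u ∉ p.support := by
        simp [support] at hnd; exact ⟨hnd.2, hnd.1⟩
      rcases hw with rfl | hw
      · exact Or.inl ⟨hwz, .nil _, by simp [edges], by simp [support, hwz]⟩
      · by_cases hz : u = z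
        · subst hz
          obtain ⟨q, h1, h2, _⟩ := exists_suffix p w hw
          refine Or.inr ⟨fun hv => hnd'.2 (hv ▸ end_mem_support p), q,
            fun g hg => by simp [edges, h1 g hg], ?_⟩
          intro x hx
          refine ⟨by simp [support, h2 x hx], fun hxz => hnd'.2 (hxz ▸ h2 x hx)⟩
        · rcases reach_end_avoiding p hnd'.1 z w hw hwz with ⟨hu'z, q, h1, h2⟩ | ⟨hvz, q, h1, h2⟩
          · refine Or.inl ⟨hz, q.append (.cons e (by rw [h, Sym2.eq_swap]) (.nil u)), ?_, ?_⟩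
            · intro g hg
              rw [edges_append] at hg
              rcases List.mem_append.1 hg with hg | hg
              · simp [edges, h1 g hg]
              · simp only [edges, List.mem_cons] at hg
                rcases hg with rfl | hg
                · simp [edges]
                · simp [edges] at hg
            · intro x hx
              rcases mem_support_append _ _ hx with hx | hx
              · exact ⟨by simp [support, (h2 x hx).1], (h2 x hx).2⟩
              · simp [support] at hx
                rcases hx with rfl | rfl
                · exact ⟨by simp [support, (h2 x (end_mem_support q)).1],
                    (h2 x (end_mem_support q)).2⟩
                · exact ⟨by simp [support], hz⟩
          · refine Or.inr ⟨hvz, q, fun g hg => by simp [edges, h1 g hg], ?_⟩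
            intro x hx
            exact ⟨by simp [support, (h2 x hx).1], (h2 x hx).2⟩

/-- Truncation lemma T. -/
lemma truncate {S : Set V} {D : Set E} (g : E) :
    ∀ {u v : V} (p : G.Walk u v), (∀ e ∈ p.edges, e ∈ D ∨ e = g) →
    (∀ x ∈ p.support, x ∈ S) →
    G.ReachableIn S D u v ∨ ∃ c d, G.ends g = s(c, d) ∧
      G.ReachableIn S D u c ∧ G.ReachableIn S D d v
  | _, _, .nil v, _, hS => Or.inl (ReachableIn.refl (hS v (by simp [support])))
  | u, w, .cons (v := u') e h p, hE, hS => by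
      have hS' : ∀ x ∈ p.support, x ∈ S := fun x hx => hS x (by simp [support, hx])
      have hu : u ∈ S := hS u (start_mem_support _)
      have hE' : ∀ e' ∈ p.edges, e' ∈ D ∨ e' = g := fun e' he' => hE e' (by simp [edges, he'])
      rcases hE e (by simp [edges]) with heD | heg
      · rcases truncate g p hE' hS' with hr | ⟨c, d, hcd, h1, h2⟩
        · exact Or.inl (ReachableIn.trans ⟨.cons e h (.nil u'), by simp [edges, heD],
            by simp [support, hu, hS' u' (start_mem_support p)]⟩ hr)
        · exact Or.inr ⟨c, d, hcd, ReachableIn.trans ⟨.cons e h (.nil u'),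
            by simp [edges, heD], by simp [support, hu, hS' u' (start_mem_support p)]⟩ h1, h2⟩
      · subst heg
        rcases truncate e p hE' hS' with hr | ⟨c, d, hcd, h1, h2⟩
        · exact Or.inr ⟨u, u', h, ReachableIn.refl hu, hr⟩
        · rw [h] at hcd
          rcases Sym2.eq_iff.1 hcd.symm with ⟨hc, hd⟩ | ⟨hc, hd⟩
          · exact Or.inr ⟨u, u', h, ReachableIn.refl hu, hd ▸ h2⟩
          · exact Or.inl (hd ▸ h2)
  termination_by u v p => p.edges.length
  decreasing_by all_goals simp [edges]

/-- Loop removal. -/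
lemma remove_loops (g : E) (x : V) (hg : G.ends g = s(x, x)) :
    ∀ {u v : V} (p : G.Walk u v), ∃ q : G.Walk u v,
      (∀ e ∈ q.edges, e ∈ p.edges ∧ e ≠ g) ∧ (∀ y ∈ q.support, y ∈ p.support)
  | _, _, .nil v => ⟨.nil v, by simp [edges], by simp⟩
  | u, w, .cons (v := u') e h p => by
      obtain ⟨q, h1, h2⟩ := remove_loops g x hg p
      by_cases heg : e = g
      · subst heg
        rw [hg] at h
        obtain ⟨rfl, rfl⟩ : x = u ∧ x = u' := by
          rcases Sym2.eq_iff.1 h with ⟨ha, hb⟩ | ⟨ha, hb⟩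
          · exact ⟨ha, hb⟩
          · exact ⟨hb, ha⟩
        exact ⟨q, fun e' he' => ⟨by simp [edges, (h1 e' he').1], (h1 e' he').2⟩,
          fun y hy => by simp [support, h2 y hy]⟩
      · refine ⟨.cons e h q, ?_, ?_⟩
        · intro e' he'
          simp only [edges, List.mem_cons] at he' ⊢
          rcases he' with rfl | he'
          · exact ⟨Or.inl rfl, heg⟩
          · exact ⟨Or.inr (h1 e' he').1, (h1 e' he').2⟩
        · intro y hy
          simp only [support, List.mem_cons] at hy ⊢
          rcases hy with rfl | hy
          · exact Or.inl rfl
          · exact Or.inr (h2 y hy)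

end Walk


/-- Ear lemma: any path between two vertices of a block lies inside the block. -/
lemma ear_lemma {S : Set V} {B : Set E}
    (hsub : G.IsSubgraphPair S B) (hconn : G.ConnectedOn S B)
    (hncv : G.NoCutVertexOn S B)
    (hmax : ∀ S' B', S ⊆ S' → B ⊆ B' → G.IsSubgraphPair S' B' → G.ConnectedOn S' B' →
      G.NoCutVertexOn S' B' → S' = S ∧ B' = B)
    {u v : V} (hu : u ∈ S) (hv : v ∈ S) (P : G.Walk u v) (hnd : P.support.Nodup) :
    (∀ x ∈ P.support, x ∈ S) ∧ (∀ g ∈ P.edges, g ∈ B) := by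
  set S' : Set V := S ∪ {x | x ∈ P.support} with hS'def
  set B' : Set E := B ∪ {g | g ∈ P.edges} with hB'def
  have hSS' : S ⊆ S' := Set.subset_union_left
  have hBB' : B ⊆ B' := Set.subset_union_left
  have hsub' : G.IsSubgraphPair S' B' := by
    intro g hg x hx
    rcases hg with hg | hg
    · exact hSS' (hsub g hg x hx)
    · exact Or.inr (P.mem_support_of_mem_edges g hg x hx)
  -- every vertex of S' reaches some vertex of S avoiding a forbidden vertex z
  have key : ∀ z, ∀ w ∈ S', w ≠ z → ∃ s ∈ S, s ≠ z ∧ G.ReachableIn (S' \ {z}) B' w s := by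
    intro z w hw hwz
    rcases hw with hw | hw
    · exact ⟨w, hw, hwz, ReachableIn.refl ⟨hSS' hw, hwz⟩⟩
    · rcases P.reach_end_avoiding hnd z w hw hwz with ⟨hz, q, h1, h2⟩ | ⟨hz, q, h1, h2⟩
      · exact ⟨u, hu, hz, q, fun g hg => Or.inr (h1 g hg),
          fun x hx => ⟨Or.inr (h2 x hx).1, (h2 x hx).2⟩⟩
      · exact ⟨v, hv, hz, q, fun g hg => Or.inr (h1 g hg),
          fun x hx => ⟨Or.inr (h2 x hx).1, (h2 x hx).2⟩⟩
  have hconn' : G.ConnectedOn S' B' := by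
    refine ⟨hconn.1.mono hSS', ?_⟩
    intro w1 hw1 w2 hw2
    -- reach S vertices: use key with a z that is nothing (use fresh approach: z := w?) 
    have r1 : ∃ s ∈ S, G.ReachableIn S' B' w1 s := by
      rcases hw1 with hw | hw
      · exact ⟨w1, hw, ReachableIn.refl (hSS' hw)⟩
      · obtain ⟨q, h1, h2, _⟩ := P.exists_suffix w1 hw
        exact ⟨v, hv, q, fun g hg => Or.inr (h1 g hg), fun x hx => Or.inr (h2 x hx)⟩
    have r2 : ∃ s ∈ S, G.ReachableIn S' B' w2 s := by
      rcases hw2 with hw | hw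
      · exact ⟨w2, hw, ReachableIn.refl (hSS' hw)⟩
      · obtain ⟨q, h1, h2, _⟩ := P.exists_suffix w2 hw
        exact ⟨v, hv, q, fun g hg => Or.inr (h1 g hg), fun x hx => Or.inr (h2 x hx)⟩
    obtain ⟨s1, hs1, hr1⟩ := r1
    obtain ⟨s2, hs2, hr2⟩ := r2
    exact (hr1.trans ((hconn.2 s1 hs1 s2 hs2).mono hSS' hBB')).trans hr2.symm
  have hncv' : G.NoCutVertexOn S' B' := by
    intro z w1 hw1 w2 hw2 h1z h2z
    obtain ⟨s1, hs1, hs1z, hr1⟩ := key z w1 hw1 h1z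
    obtain ⟨s2, hs2, hs2z, hr2⟩ := key z w2 hw2 h2z
    have hmid : G.ReachableIn (S' \ {z}) B' s1 s2 := by
      refine (hncv z s1 hs1 s2 hs2 hs1z hs2z).mono ?_ hBB'
      intro x hx
      exact ⟨hSS' hx.1, hx.2⟩
    exact (hr1.trans hmid).trans hr2.symm
  obtain ⟨hSeq, hBeq⟩ := hmax S' B' hSS' hBB' hsub' hconn' hncv'
  constructor
  · intro x hx
    have : x ∈ S' := Or.inr hx
    rwa [hSeq] at this
  · intro g hg
    have : g ∈ B' := Or.inr hg
    rwa [hBeq] at this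

lemma no_loops (h : G.MinTwoEdgeConn) (g : E) (x : V) : G.ends g ≠ s(x, x) := by
  classical
  intro hg
  obtain ⟨h2, -, hmin⟩ := h
  have hm := hmin g (Set.mem_univ g)
  rw [EdgeConnAtLeastOn] at hm; push_neg at hm
  obtain ⟨F, hF1, hF2, u₀, -, v₀, -, hdis⟩ := hm
  rcases (by omega : F.card = 0 ∨ F.card = 1) with h0 | h1
  · have hFe : F = ∅ := Finset.card_eq_zero.1 h0
    subst hFe
    have := h2 {g} (by simp) (by simp) u₀ trivial v₀ trivial
    exact hdis (this.mono subset_rfl (by intro a ha; simp at ha ⊢; exact ha))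
  · obtain ⟨f', rfl⟩ := Finset.card_eq_one.1 h1
    have hf'g : f' ≠ g := by
      have := hF1 (Finset.mem_coe.2 (Finset.mem_singleton_self f'))
      simp at this; exact this
    obtain ⟨W, hWe, -⟩ := h2 {f'} (by simp) (by simp) u₀ trivial v₀ trivial
    obtain ⟨W', hW'e, -⟩ := Walk.remove_loops g x hg W
    refine hdis ⟨W', ?_, fun w _ => trivial⟩
    intro a ha
    have h1 := (hW'e a ha).1
    have h2' := (hW'e a ha).2
    have := hWe a h1
    simp at this ⊢
    exact ⟨h2', this⟩

lemma core_lemma {S : Set V} {B : Set E} (h : G.MinTwoEdgeConn)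
    (hsub : G.IsSubgraphPair S B) (hconn : G.ConnectedOn S B)
    (hncv : G.NoCutVertexOn S B)
    (hmax : ∀ S' B', S ⊆ S' → B ⊆ B' → G.IsSubgraphPair S' B' → G.ConnectedOn S' B' →
      G.NoCutVertexOn S' B' → S' = S ∧ B' = B)
    {e : E} (he : e ∈ B) :
    ∃ f, f ∈ B ∧ f ≠ e ∧ ∃ x y, x ∈ S ∧ y ∈ S ∧
      ¬ G.ReachableIn Set.univ {g | g ≠ e ∧ g ≠ f} x y := by
  classical
  obtain ⟨h2, -, hmin⟩ := h
  have hm := hmin e (Set.mem_univ e)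
  rw [EdgeConnAtLeastOn] at hm; push_neg at hm
  obtain ⟨F, hF1, hF2, u₀, -, v₀, -, hdis⟩ := hm
  rcases (by omega : F.card = 0 ∨ F.card = 1) with h0 | h1
  · exfalso
    have hFe : F = ∅ := Finset.card_eq_zero.1 h0
    subst hFe
    have := h2 {e} (by simp) (by simp) u₀ trivial v₀ trivial
    exact hdis (this.mono subset_rfl (by intro a ha; simp at ha ⊢; exact ha))
  obtain ⟨f, rfl⟩ := Finset.card_eq_one.1 h1
  have hfe : f ≠ e := by
    have := hF1 (Finset.mem_coe.2 (Finset.mem_singleton_self f))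
    simp at this; exact this
  set D : Set E := {g | g ≠ e ∧ g ≠ f} with hD
  have hD0 : ¬ G.ReachableIn Set.univ D u₀ v₀ := by
    intro hr
    refine hdis (hr.mono subset_rfl ?_)
    intro a ha
    simp only [hD, Set.mem_setOf_eq] at ha
    simp [ha.1, ha.2]
  -- truncate along a walk avoiding f, at edge e
  obtain ⟨Wf, hWfe, -⟩ := h2 {f} (by simp) (by simp) u₀ trivial v₀ trivial
  have hTf := Walk.truncate (S := Set.univ) (D := D) e Wf
    (by intro g' hg'
        have := hWfe g' hg'
        simp at this
        by_cases hge : g' = e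
        · exact Or.inr hge
        · exact Or.inl ⟨hge, this⟩)
    (fun x _ => trivial)
  rcases hTf with hr | ⟨x, y, hxy, hux, hyv⟩
  · exact absurd hr hD0
  -- truncate along a walk avoiding e, at edge f
  obtain ⟨We, hWee, -⟩ := h2 {e} (by simp) (by simp) u₀ trivial v₀ trivial
  have hTe := Walk.truncate (S := Set.univ) (D := D) f We
    (by intro g' hg'
        have := hWee g' hg'
        simp at this
        by_cases hgf : g' = f
        · exact Or.inr hgf
        · exact Or.inl ⟨this, hgf⟩)
    (fun x _ => trivial)
  rcases hTe with hr | ⟨a, b, hab, hua, hbv⟩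
  · exact absurd hr hD0
  have hxS : x ∈ S := hsub e he x (by rw [hxy]; exact Sym2.mem_mk_left x y)
  have hyS : y ∈ S := hsub e he y (by rw [hxy]; exact Sym2.mem_mk_right x y)
  have hnxy : ¬ G.ReachableIn Set.univ D x y := fun hr => hD0 (hux.trans (hr.trans hyv))
  have hxa : G.ReachableIn Set.univ D x a := hux.symm.trans hua
  have hyb : G.ReachableIn Set.univ D y b := hyv.trans hbv.symm
  refine ⟨f, ?_, hfe, x, y, hxS, hyS, hnxy⟩
  -- show f ∈ B via the ear lemma
  obtain ⟨W1, hW1e, -⟩ := id hxa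
  obtain ⟨P1, hP1nd, hP1e, hP1s⟩ := W1.exists_path
  obtain ⟨W2, hW2e, -⟩ := id hyb
  obtain ⟨P2, hP2nd, hP2e, hP2s⟩ := W2.exists_path
  have hP1D : ∀ g' ∈ P1.edges, g' ∈ D := fun g' hg' => hW1e g' (hP1e g' hg')
  have hP2D : ∀ g' ∈ P2.edges, g' ∈ D := fun g' hg' => hW2e g' (hP2e g' hg')
  have hcls1 : ∀ c ∈ P1.support, G.ReachableIn Set.univ D x c := by
    intro c hc
    obtain ⟨q, hq1, -, -⟩ := P1.exists_suffix c hc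
    exact hxa.trans (ReachableIn.symm ⟨q, fun g' hg' => hP1D g' (hq1 g' hg'), fun w _ => trivial⟩)
  have hcls2 : ∀ c ∈ P2.support, G.ReachableIn Set.univ D y c := by
    intro c hc
    obtain ⟨q, hq1, -, -⟩ := P2.exists_suffix c hc
    exact hyb.trans (ReachableIn.symm ⟨q, fun g' hg' => hP2D g' (hq1 g' hg'), fun w _ => trivial⟩)
  have hdisj : ∀ c, c ∈ P1.support → c ∉ P2.support := by
    intro c h1 h2'
    exact hnxy ((hcls1 c h1).trans (hcls2 c h2').symm)
  set P : G.Walk x y := P1.append (Walk.cons f hab P2.reverse) with hPdef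
  have hndP : P.support.Nodup := by
    obtain ⟨t, ht, hat⟩ := P1.support_concat
    have hsupp : P.support = t ++ (a :: P2.support.reverse) := by
      rw [hPdef, Walk.support_append, ht, List.dropLast_concat]
      congr 1
      show Walk.support (Walk.cons f hab P2.reverse) = a :: P2.support.reverse
      rw [show Walk.support (Walk.cons f hab P2.reverse) = a :: P2.reverse.support from rfl,
        Walk.support_reverse]
    rw [hsupp]
    rw [List.nodup_append]
    refine ⟨?_, ?_, ?_⟩
    · exact (List.nodup_append.1 (ht ▸ hP1nd)).1
    · rw [List.nodup_cons]
      refine ⟨?_, List.nodup_reverse.2 hP2nd⟩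
      intro ha'
      exact hdisj a (P1.end_mem_support) (List.mem_reverse.1 ha')
    · intro c hc c' hc2 hcc'
      subst hcc'
      have hcP1 : c ∈ P1.support := ht ▸ List.mem_append_left _ hc
      rcases List.mem_cons.1 hc2 with rfl | hc2
      · exact hat hP1nd hc
      · exact hdisj c hcP1 (List.mem_reverse.1 hc2)
  have := ear_lemma hsub hconn hncv hmax hxS hyS P hndP
  refine this.2 f ?_
  rw [hPdef, Walk.edges_append]
  exact List.mem_append_right _ (by simp [Walk.edges])

lemma Walk.first_edge : ∀ {u v : V} (p : G.Walk u v), u ≠ v →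
    ∃ g u', g ∈ p.edges ∧ G.ends g = s(u, u')
  | _, _, .nil v, h => absurd rfl h
  | _, _, .cons e he p, _ => ⟨e, _, by simp [Walk.edges], he⟩

lemma block_edge_conn_two {S : Set V} {B : Set E} (h : G.MinTwoEdgeConn)
    (hsub : G.IsSubgraphPair S B) (hconn : G.ConnectedOn S B)
    (hncv : G.NoCutVertexOn S B)
    (hmax : ∀ S' B', S ⊆ S' → B ⊆ B' → G.IsSubgraphPair S' B' → G.ConnectedOn S' B' →
      G.NoCutVertexOn S' B' → S' = S ∧ B' = B) :
    G.EdgeConnAtLeastOn S B 2 := by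
  classical
  intro F hFB hF2 u hu v hv
  rcases (by omega : F.card = 0 ∨ F.card = 1) with h0 | h1
  · have hFe : F = ∅ := Finset.card_eq_zero.1 h0
    subst hFe
    exact (hconn.2 u hu v hv).mono subset_rfl (by intro g hg; simp [hg])
  obtain ⟨f₀, rfl⟩ := Finset.card_eq_one.1 h1
  have hf₀B : f₀ ∈ B := hFB (by simp)
  set D : Set E := {g | g ∈ B ∧ g ≠ f₀} with hDdef
  have hDgoal : G.ReachableIn S D u v → G.ReachableIn S (B \ ↑({f₀} : Finset E)) u v := by
    intro hr
    exact hr.mono subset_rfl (by intro g hg; simpa [hDdef] using hg)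
  by_contra hnr
  have hnr' : ¬ G.ReachableIn S D u v := fun hr => hnr (hDgoal hr)
  obtain ⟨W, hWe, hWs⟩ := hconn.2 u hu v hv
  have hT := Walk.truncate (S := S) (D := D) f₀ W
    (by intro g' hg'
        by_cases hgf : g' = f₀
        · exact Or.inr hgf
        · exact Or.inl ⟨hWe g' hg', hgf⟩) hWs
  rcases hT with hr | ⟨x₀, y₀, hxy₀, hux₀, hy₀v⟩
  · exact hnr' hr
  have hx₀S : x₀ ∈ S := hsub f₀ hf₀B x₀ (by rw [hxy₀]; exact Sym2.mem_mk_left x₀ y₀)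
  have hy₀S : y₀ ∈ S := hsub f₀ hf₀B y₀ (by rw [hxy₀]; exact Sym2.mem_mk_right x₀ y₀)
  have hnxy : ¬ G.ReachableIn S D x₀ y₀ := fun hr => hnr' (hux₀.trans (hr.trans hy₀v))
  have hx₀y₀ : x₀ ≠ y₀ := fun heq => hnxy (heq ▸ ReachableIn.refl hx₀S)
  -- given z ~ x₀ avoiding x₀... we use the no-cut-vertex property
  have avoid : ∀ z ∈ S, ∀ c d : V, G.ends f₀ = s(c, d) → z ≠ c → d ≠ c →
      G.ReachableIn S D z d := by
    intro z hzS c d hcd hzc hdc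
    have hdS : d ∈ S := hsub f₀ hf₀B d (by rw [hcd]; exact Sym2.mem_mk_right c d)
    obtain ⟨W', hW'e, hW's⟩ := hncv c z hzS d hdS hzc hdc
    have hf₀W' : f₀ ∉ W'.edges := by
      intro hmem
      have := W'.mem_support_of_mem_edges f₀ hmem c (by rw [hcd]; exact Sym2.mem_mk_left c d)
      exact (hW's c this).2 rfl
    exact ⟨W', fun g hg => ⟨hW'e g hg, fun hgf => hf₀W' (hgf ▸ hg)⟩,
      fun w hw => (hW's w hw).1⟩
  by_cases hz : ∃ z ∈ S, z ≠ x₀ ∧ z ≠ y₀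
  · obtain ⟨z, hzS, hzx, hzy⟩ := hz
    obtain ⟨Wz, hWze, hWzs⟩ := hconn.2 z hzS x₀ hx₀S
    have hTz := Walk.truncate (S := S) (D := D) f₀ Wz
      (by intro g' hg'
          by_cases hgf : g' = f₀
          · exact Or.inr hgf
          · exact Or.inl ⟨hWze g' hg', hgf⟩) hWzs
    have hzor : G.ReachableIn S D z x₀ ∨ G.ReachableIn S D z y₀ := by
      rcases hTz with hr | ⟨c, d, hcd, h1', h2'⟩
      · exact Or.inl hr
      · rw [hxy₀] at hcd
        rcases Sym2.eq_iff.1 hcd with ⟨rfl, rfl⟩ | ⟨rfl, rfl⟩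
        · exact Or.inl h1'
        · exact Or.inr h1'
    rcases hzor with hr | hr
    · -- z ~ x₀; use no-cut-vertex at x₀ to connect z to y₀
      have : G.ReachableIn S D z y₀ := avoid z hzS x₀ y₀ hxy₀ hzx (Ne.symm hx₀y₀)
      exact hnxy (hr.symm.trans this)
    · -- z ~ y₀; use no-cut-vertex at y₀ to connect z to x₀
      have : G.ReachableIn S D z x₀ :=
        avoid z hzS y₀ x₀ (by rw [hxy₀, Sym2.eq_swap]) hzy hx₀y₀
      exact hnxy (this.symm.trans hr)
  · push_neg at hz
    -- S = {x₀, y₀}; every edge of B equals f₀, else x₀ ~ y₀ directly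
    have hBf : ∀ g ∈ B, g = f₀ := by
      intro g hgB
      by_contra hgf
      obtain ⟨⟨c, d⟩, hcd'⟩ := Quot.exists_rep (G.ends g)
      have hcd : G.ends g = s(c, d) := hcd'.symm
      have hcS : c ∈ S := hsub g hgB c (by rw [hcd]; exact Sym2.mem_mk_left c d)
      have hdS : d ∈ S := hsub g hgB d (by rw [hcd]; exact Sym2.mem_mk_right c d)
      have hcd_ne : c ≠ d := by
        intro heq
        exact no_loops h g c (by rw [hcd, heq])
      have hreach : ∀ c' d', G.ends g = s(c', d') → c' ∈ S → d' ∈ S →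
          G.ReachableIn S D c' d' :=
        fun c' d' hg' hc' hd' => ⟨Walk.cons g hg' (Walk.nil d'),
          by simp [Walk.edges]; exact ⟨hgB, hgf⟩, by simp [Walk.support, hc', hd']⟩
      have hor : ∀ w ∈ S, w = x₀ ∨ w = y₀ := fun w hw => by
        by_cases hwx : w = x₀
        · exact Or.inl hwx
        · exact Or.inr (hz w hw hwx)
      rcases hor c hcS with rfl | rfl <;> rcases hor d hdS with rfl | rfl
      · exact hcd_ne rfl
      · exact hnxy (hreach _ _ hcd hcS hdS)
      · exact hnxy (hreach _ _ (by rw [hcd, Sym2.eq_swap]) hdS hcS)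
      · exact hcd_ne rfl
    -- now B ⊆ {f₀}: use 2-edge-connectivity of G and the ear lemma for a contradiction
    obtain ⟨W', hW'e, -⟩ := h.1 {f₀} (by simp) (by simp) x₀ trivial y₀ trivial
    obtain ⟨P, hPnd, hPe, -⟩ := W'.exists_path
    have hear := ear_lemma hsub hconn hncv hmax hx₀S hy₀S P hPnd
    obtain ⟨g, u', hgP, -⟩ := Walk.first_edge P hx₀y₀
    have hgB : g ∈ B := hear.2 g hgP
    have : g = f₀ := hBf g hgB
    have := hW'e g (hPe g hgP)
    simp at this
    exact this ‹g = f₀›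

lemma block_B_nonempty [Fintype V] {S : Set V} {B : Set E} (h : G.MinTwoEdgeConn)
    (h3 : 3 ≤ Fintype.card V)
    (hsub : G.IsSubgraphPair S B) (hconn : G.ConnectedOn S B)
    (hncv : G.NoCutVertexOn S B)
    (hmax : ∀ S' B', S ⊆ S' → B ⊆ B' → G.IsSubgraphPair S' B' → G.ConnectedOn S' B' →
      G.NoCutVertexOn S' B' → S' = S ∧ B' = B) :
    B.Nonempty := by
  classical
  rw [Set.nonempty_iff_ne_empty]
  intro hBe
  subst hBe
  obtain ⟨s, hsS⟩ := hconn.1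
  have hS1 : ∀ t ∈ S, t = s := by
    intro t ht
    by_contra hts
    obtain ⟨W, hWe, -⟩ := hconn.2 t ht s hsS
    obtain ⟨g, u', hgW, -⟩ := Walk.first_edge W hts
    exact (hWe g hgW)
  obtain ⟨t, hts⟩ := Fintype.exists_ne_of_one_lt_card (by omega) s
  obtain ⟨W, -, -⟩ := h.1 ∅ (by simp) (by simp) s trivial t trivial
  obtain ⟨g, s₁, -, hg⟩ := Walk.first_edge W (Ne.symm hts)
  have hs₁ : s₁ ≠ s := by
    intro heq
    exact no_loops h g s (by rw [hg, heq])
  set S' : Set V := {s, s₁} with hS'def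
  set B' : Set E := {g} with hB'def
  have hsS' : s ∈ S' := by simp [hS'def]
  have hs₁S' : s₁ ∈ S' := by simp [hS'def]
  have hSS' : S ⊆ S' := fun x hx => by rw [hS1 x hx]; exact hsS'
  have hsub' : G.IsSubgraphPair S' B' := by
    intro g' hg' x hx
    rw [hB'def, Set.mem_singleton_iff] at hg'
    subst hg'
    rw [hg] at hx
    rcases Sym2.mem_iff.1 hx with rfl | rfl
    · exact hsS'
    · exact hs₁S'
  have hwalk : ∀ T : Set V, s ∈ T → s₁ ∈ T → G.ReachableIn T B' s s₁ := by
    intro T h1 h2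
    refine ⟨Walk.cons g hg (Walk.nil s₁), by simp [Walk.edges, hB'def], ?_⟩
    intro w hw
    simp [Walk.support] at hw
    rcases hw with rfl | rfl
    · exact h1
    · exact h2
  have hpair : ∀ (T : Set V), s ∈ T → s₁ ∈ T → ∀ u ∈ S', ∀ v ∈ S',
      (u ∈ T) → (v ∈ T) → G.ReachableIn T B' u v := by
    intro T h1 h2 u hu v hv huT hvT
    simp only [hS'def, Set.mem_insert_iff, Set.mem_singleton_iff] at hu hv
    rcases hu with rfl | rfl <;> rcases hv with rfl | rfl
    · exact ReachableIn.refl huT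
    · exact hwalk T h1 h2
    · exact (hwalk T h1 h2).symm
    · exact ReachableIn.refl huT
  have hconn' : G.ConnectedOn S' B' :=
    ⟨⟨s, hsS'⟩, fun u hu v hv => hpair S' hsS' hs₁S' u hu v hv hu hv⟩
  have hncv' : G.NoCutVertexOn S' B' := by
    intro z u hu v hv huz hvz
    by_cases huv : u = v
    · subst huv; exact ReachableIn.refl ⟨hu, huz⟩
    · have hsz : s ≠ z ∧ s₁ ≠ z := by
        simp only [hS'def, Set.mem_insert_iff, Set.mem_singleton_iff] at hu hv
        rcases hu with rfl | rfl <;> rcases hv with rfl | rfl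
        · exact absurd rfl huv
        · exact ⟨huz, hvz⟩
        · exact ⟨hvz, huz⟩
        · exact absurd rfl huv
      exact hpair (S' \ {z}) ⟨hsS', hsz.1⟩ ⟨hs₁S', hsz.2⟩ u hu v hv ⟨hu, huz⟩ ⟨hv, hvz⟩
  obtain ⟨hSeq, -⟩ := hmax S' B' hSS' (Set.empty_subset _) hsub' hconn' hncv'
  have : s₁ ∈ S := hSeq ▸ hs₁S'
  exact hs₁ (hS1 s₁ this)

end Multigraph

/-- Every block of a minimally `2`-edge-connected multigraph (of order at least `3`)
is minimally `2`-edge-connected. -/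
theorem stmt_13 {V E : Type} [Fintype V] (G : Multigraph V E)
    (h3 : 3 ≤ Fintype.card V) (h : G.MinTwoEdgeConn) :
    ∀ (S : Set V) (B : Set E), G.IsBlock S B → G.MinTwoEdgeConnOn S B := by
  classical
  intro S B hblock
  obtain ⟨hsub, hconn, hncv, hmax⟩ := hblock
  refine ⟨Multigraph.block_edge_conn_two h hsub hconn hncv hmax, ?_, ?_⟩
  · -- not 3-edge-connected
    intro h3'
    obtain ⟨e, heB⟩ := Multigraph.block_B_nonempty h h3 hsub hconn hncv hmax
    obtain ⟨f, hfB, hfe, x, y, hxS, hyS, hnxy⟩ := Multigraph.core_lemma h hsub hconn hncv hmax heB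
    have hcard : ({e, f} : Finset E).card < 3 := by
      have := Finset.card_insert_le e ({f} : Finset E)
      simp at this ⊢
      omega
    have hr := h3' {e, f} (by
        intro g hg
        simp at hg
        rcases hg with rfl | rfl
        · exact heB
        · exact hfB) hcard x hxS y hyS
    refine hnxy (hr.mono (fun _ _ => trivial) ?_)
    intro g hg
    simp only [Set.mem_diff, Finset.coe_insert, Set.mem_insert_iff, Finset.coe_singleton,
      Set.mem_singleton_iff, not_or] at hg
    exact ⟨hg.2.1, hg.2.2⟩
  · -- deleting any edge destroys 2-edge-connectivity
    intro e heB h2'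
    obtain ⟨f, hfB, hfe, x, y, hxS, hyS, hnxy⟩ := Multigraph.core_lemma h hsub hconn hncv hmax heB
    have hr := h2' {f} (by
        intro g hg
        simp at hg
        subst hg
        exact ⟨hfB, hfe⟩) (by simp) x hxS y hyS
    refine hnxy (hr.mono (fun _ _ => trivial) ?_)
    intro g hg
    simp only [Set.mem_diff, Set.mem_singleton_iff, Finset.coe_singleton] at hg
    exact ⟨hg.1.2, hg.2⟩
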